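/- Let D ⊆ ℂ be an open convex set with nonempty boundary and let u, v ∈ D with u ≠ v. Then s_D(u, v) = sup over all open half-planes H = {z ∈ ℂ : Re(conj(n)(z − p)) < 0}, where n ∈ ℂ with |n| = 1 and p ∈ ∂D satisfy D ⊆ H, of the quantities s_H(u, v) = |u − v| / inf_{w ∈ ∂H}(|u − w| + |w − v|). -/

import Mathlib

open Complex

private lemma hp_isOpen (n p : ℂ) : IsOpen {z : ℂ | ((starRingEnd ℂ) n * (z - p)).re < 0} :=
  isOpen_lt (Complex.continuous_re.comp
    ((continuous_const.mul (continuous_id.sub continuous_const)))) continuous_const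

private lemma hp_mem_frontier {n : ℂ} (hn : ‖n‖ = 1) (p : ℂ) :
    p ∈ frontier {z : ℂ | ((starRingEnd ℂ) n * (z - p)).re < 0} := by
  rw [(hp_isOpen n p).frontier_eq]
  constructor
  · rw [Metric.mem_closure_iff]
    intro ε hε
    refine ⟨p - (ε/2) • n, ?_, ?_⟩
    · show ((starRingEnd ℂ) n * (p - (ε/2) • n - p)).re < 0
      have : p - (ε/2) • n - p = -((ε/2 : ℂ) * n) := by
        rw [Complex.real_smul]; push_cast; ring
      rw [this]
      have hns : (starRingEnd ℂ) n * -((ε/2 : ℂ) * n) = -((ε/2 : ℂ) * ((Complex.normSq n : ℝ) : ℂ)) := by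
        rw [← Complex.mul_conj]
        ring
      rw [hns]
      have h1 : Complex.normSq n = 1 := by
        rw [← Complex.sq_norm, hn]; norm_num
      rw [h1]
      simp
      positivity
    · rw [dist_eq_norm]
      have : p - (p - (ε/2) • n) = (ε/2) • n := by abel
      rw [this, norm_smul]
      simp [hn, abs_of_pos hε]
      linarith
  · simp only [Set.mem_setOf_eq, sub_self, mul_zero, Complex.zero_re]
    exact lt_irrefl 0

private lemma seg_frontier {D : Set ℂ} (hD : IsOpen D) {a b : ℂ} (ha : a ∈ D) (hb : b ∉ D) :
    ∃ w ∈ segment ℝ a b, w ∈ frontier D := by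
  by_cases hbc : b ∈ closure D
  · exact ⟨b, right_mem_segment ℝ a b, by rw [hD.frontier_eq]; exact ⟨hbc, hb⟩⟩
  · by_contra h
    push_neg at h
    have hcov : segment ℝ a b ⊆ D ∪ (closure D)ᶜ := by
      intro x hx
      by_cases hc : x ∈ closure D
      · left
        have := h x hx
        rw [hD.frontier_eq] at this
        by_contra hxD
        exact this ⟨hc, hxD⟩
      · exact Or.inr hc
    obtain ⟨x, _, hx1, hx2⟩ := (convex_segment a b).isPreconnected D (closure D)ᶜ
      hD (isClosed_closure.isOpen_compl) hcov ⟨a, left_mem_segment ℝ a b, ha⟩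
      ⟨b, right_mem_segment ℝ a b, hbc⟩
    exact hx2 (subset_closure hx1)

private lemma exists_support {D : Set ℂ} (hD : IsOpen D) (hconv : Convex ℝ D) {u w : ℂ}
    (hu : u ∈ D) (hw : w ∉ D) :
    ∃ n : ℂ, ‖n‖ = 1 ∧ ∀ z ∈ D, ((starRingEnd ℂ) n * (z - w)).re < 0 := by
  obtain ⟨f, hf⟩ := geometric_hahn_banach_open_point hconv hD hw
  set n0 : ℂ := (f 1 : ℂ) + (f I : ℂ) * I with hn0
  have key : ∀ z : ℂ, ((starRingEnd ℂ) n0 * z).re = f z := by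
    intro z
    have hz : z = z.re • (1 : ℂ) + z.im • I := by
      simp only [Complex.real_smul, smul_eq_mul, mul_one]
      exact (Complex.re_add_im z).symm
    have hfz : f z = z.re * f 1 + z.im * f I := by
      conv_lhs => rw [hz]
      rw [map_add, map_smul, map_smul]; simp [smul_eq_mul]
    rw [hfz, hn0]
    simp [Complex.mul_re, Complex.add_re, Complex.add_im]
    ring
  have hn0ne : n0 ≠ 0 := by
    intro h0
    have h1 := key u
    rw [h0] at h1
    simp at h1
    have h2 := key w
    rw [h0] at h2
    simp at h2
    have h3 := hf u hu
    rw [← h1, ← h2] at h3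
    exact lt_irrefl 0 h3
  set r : ℝ := (‖n0‖)⁻¹ with hr
  have hrpos : 0 < r := by
    rw [hr]
    exact inv_pos.mpr (norm_pos_iff.mpr hn0ne)
  refine ⟨r • n0, ?_, ?_⟩
  · rw [norm_smul, Real.norm_eq_abs, abs_of_pos hrpos, hr, inv_mul_cancel₀ (norm_ne_zero_iff.mpr hn0ne)]
  · intro z hz
    rw [Complex.real_smul, map_mul, Complex.conj_ofReal, mul_assoc, Complex.re_ofReal_mul, key]
    have : f (z - w) = f z - f w := map_sub f z w
    rw [this]
    have := hf z hz
    exact mul_neg_of_pos_of_neg hrpos (by linarith)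

/-- The triangular ratio metric of a proper nonempty subset `D ⊆ ℂ`:
`s_D(u, v) = |u - v| / inf_{w ∈ ∂D} (|u - w| + |w - v|)`
(for `u = v` the numerator vanishes, so the value is `0`). -/
noncomputable def sD (D : Set ℂ) (u v : ℂ) : ℝ :=
  ‖u - v‖ /
    sInf ((fun w => ‖u - w‖ + ‖w - v‖) '' frontier D)

theorem sD_convex_eq_sup_supporting_halfplanes (D : Set ℂ)
    (hD : IsOpen D) (hconv : Convex ℝ D) (hbd : (frontier D).Nonempty)
    (u v : ℂ) (hu : u ∈ D) (hv : v ∈ D) (huv : u ≠ v) :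
    sD D u v = sSup {x : ℝ | ∃ n p : ℂ, ‖n‖ = 1 ∧ p ∈ frontier D ∧
      D ⊆ {z : ℂ | ((starRingEnd ℂ) n * (z - p)).re < 0} ∧
      x = sD {z : ℂ | ((starRingEnd ℂ) n * (z - p)).re < 0} u v} := by
  set f : ℂ → ℝ := fun w => ‖u - w‖ + ‖w - v‖ with hfdef
  set S := {x : ℝ | ∃ n p : ℂ, ‖n‖ = 1 ∧ p ∈ frontier D ∧
      D ⊆ {z : ℂ | ((starRingEnd ℂ) n * (z - p)).re < 0} ∧
      x = sD {z : ℂ | ((starRingEnd ℂ) n * (z - p)).re < 0} u v} with hS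
  have habsuv : 0 < ‖u - v‖ := by simpa using sub_ne_zero.mpr huv
  have hf_lb : ∀ w, ‖u - v‖ ≤ f w := by
    intro w
    have h : u - v = (u - w) + (w - v) := by ring
    calc ‖u - v‖ = ‖(u - w) + (w - v)‖ := by rw [← h]
      _ ≤ f w := norm_add_le _ _
  have hf_pos : ∀ w, 0 < f w := fun w => lt_of_lt_of_le habsuv (hf_lb w)
  have hbdd : ∀ E : Set ℂ, BddBelow (f '' frontier E) := by
    intro E
    exact ⟨0, by rintro b ⟨w, -, rfl⟩; exact (hf_pos w).le⟩
  have hg_lb : ∀ E : Set ℂ, (frontier E).Nonempty →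
      ‖u - v‖ ≤ sInf (f '' frontier E) := by
    intro E hE
    exact le_csInf (hE.image f) (by rintro b ⟨w, -, rfl⟩; exact hf_lb w)
  have hsD : ∀ E : Set ℂ, sD E u v = ‖u - v‖ / sInf (f '' frontier E) :=
    fun E => rfl
  have hgD_pos : 0 < sInf (f '' frontier D) := lt_of_lt_of_le habsuv (hg_lb D hbd)
  -- every element of S is at most sD D u v
  have hUB : ∀ x ∈ S, x ≤ sD D u v := by
    rintro x ⟨n, p, hn, hp, hsub, rfl⟩
    set H := {z : ℂ | ((starRingEnd ℂ) n * (z - p)).re < 0} with hH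
    have hpF : p ∈ frontier H := hp_mem_frontier hn p
    have hle : sInf (f '' frontier D) ≤ sInf (f '' frontier H) := by
      apply le_csInf (Set.Nonempty.image f ⟨p, hpF⟩)
      rintro b ⟨z, hz, rfl⟩
      have hzH : z ∉ H := by
        rw [(hp_isOpen n p).frontier_eq] at hz; exact hz.2
      have hzD : z ∉ D := fun h => hzH (hsub h)
      obtain ⟨w, hwseg, hwF⟩ := seg_frontier hD hu hzD
      have h1 : sInf (f '' frontier D) ≤ f w := csInf_le (hbdd D) ⟨w, hwF, rfl⟩
      have h2 : f w ≤ f z := by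
        have hd : dist u w + dist w z = dist u z := dist_add_dist_of_mem_segment hwseg
        have h3 : ‖w - v‖ ≤ ‖w - z‖ + ‖z - v‖ := by
          have h4 : w - v = (w - z) + (z - v) := by ring
          rw [h4]; exact norm_add_le _ _
        simp only [Complex.dist_eq] at hd
        simp only [hfdef]
        linarith
      linarith
    rw [hsD, hsD]
    exact div_le_div_of_nonneg_left (norm_nonneg _) hgD_pos hle
  -- for each boundary point there is a supporting half-plane giving a good lower bound
  have hmem : ∀ w ∈ frontier D, ∃ x ∈ S, ‖u - v‖ / f w ≤ x := by
    intro w hw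
    have hwD : w ∉ D := by
      rw [hD.frontier_eq] at hw; exact hw.2
    obtain ⟨n, hn1, hsub⟩ := exists_support hD hconv hu hwD
    set H := {z : ℂ | ((starRingEnd ℂ) n * (z - w)).re < 0} with hH
    have hx : sD H u v ∈ S := ⟨n, w, hn1, hw, fun z hz => hsub z hz, rfl⟩
    refine ⟨sD H u v, hx, ?_⟩
    have hwF : w ∈ frontier H := hp_mem_frontier hn1 w
    have hgH_pos : 0 < sInf (f '' frontier H) := lt_of_lt_of_le habsuv (hg_lb H ⟨w, hwF⟩)
    have h1 : sInf (f '' frontier H) ≤ f w := csInf_le (hbdd H) ⟨w, hwF, rfl⟩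
    rw [hsD]
    exact div_le_div_of_nonneg_left (norm_nonneg _) hgH_pos h1
  apply le_antisymm
  · obtain ⟨w0, hw0⟩ := hbd
    obtain ⟨x0, hx0S, hx0⟩ := hmem w0 hw0
    have hSbdd : BddAbove S := ⟨sD D u v, hUB⟩
    have hx0pos : 0 < x0 := lt_of_lt_of_le (div_pos habsuv (hf_pos w0)) hx0
    have hMpos : 0 < sSup S := lt_of_lt_of_le hx0pos (le_csSup hSbdd hx0S)
    have hkey : ∀ w ∈ frontier D, ‖u - v‖ / sSup S ≤ f w := by
      intro w hw
      obtain ⟨x, hxS, hxle⟩ := hmem w hw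
      have h5 : ‖u - v‖ / f w ≤ sSup S := le_trans hxle (le_csSup hSbdd hxS)
      rw [div_le_iff₀ (hf_pos w)] at h5
      rw [div_le_iff₀ hMpos]
      linarith
    have hgD : ‖u - v‖ ≤ sInf (f '' frontier D) * sSup S := by
      rw [← div_le_iff₀ hMpos]
      exact le_csInf (Set.Nonempty.image f ⟨w0, hw0⟩) (by rintro b ⟨w, hw, rfl⟩; exact hkey w hw)
    rw [hsD, div_le_iff₀ hgD_pos]
    linarith [hgD, mul_comm (sInf (f '' frontier D)) (sSup S)]
  · exact Real.sSup_le hUB (div_nonneg (norm_nonneg _) hgD_pos.le)
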